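/- Let H be a real Hilbert space and T : H → H a nonexpansive map whose fixed point set Fix(T) is nonempty. Let κ, η > 0 and let F : H → H satisfy ‖F(x) − F(y)‖ ≤ κ‖x − y‖ and ⟨F(x) − F(y), x − y⟩ ≥ η‖x − y‖² for all x, y in the range of T. Fix μ ∈ (0, 2η/κ²) and a sequence (λ_n) ⊆ (0,1] with λ_n → 0, Σ_{n=1}^∞ λ_n = ∞ and (λ_n − λ_{n+1})/λ_n² → 0. Then for any u₀ ∈ H, the sequence defined by u_{n+1} := T(u_n) − λ_{n+1}·μ·F(T(u_n)) converges strongly to the unique point u* ∈ Fix(T) satisfying ⟨v − u*, F(u*)⟩ ≥ 0 for all v ∈ Fix(T); in particular such a point u* exists and is unique. -/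

import Mathlib

open scoped RealInnerProductSpace
open Filter

/-- Xu's lemma. -/
lemma xu_lemma (a α β : ℕ → ℝ) (ha : ∀ n, 0 ≤ a n)
    (hα : ∀ n, α n ∈ Set.Ioc (0:ℝ) 1)
    (hsum : Tendsto (fun n => ∑ i ∈ Finset.range n, α i) atTop atTop)
    (hrec : ∀ n, a (n+1) ≤ (1 - α n) * a n + α n * β n)
    (hβ : ∀ ε > (0:ℝ), ∀ᶠ n in atTop, β n ≤ ε) :
    Tendsto a atTop (nhds 0) := by
  have main : ∀ ε > (0:ℝ), ∀ᶠ n in atTop, a n < ε := by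
    intro ε hε
    obtain ⟨N, hN⟩ := (hβ (ε/2) (by positivity)).exists_forall_of_atTop
    have claim : ∀ n, N ≤ n →
        a n ≤ ε/2 + Real.exp (-(∑ i ∈ Finset.Ico N n, α i)) * a N := by
      intro n hn
      induction n, hn using Nat.le_induction with
      | base =>
        simp only [Finset.Ico_self, Finset.sum_empty, neg_zero, Real.exp_zero, one_mul]
        linarith
      | succ n hn ih =>
        have h1 := hrec n
        have h2 : β n ≤ ε/2 := hN n hn
        have h3 : (0:ℝ) < α n := (hα n).1
        have h4 : α n ≤ 1 := (hα n).2
        have h5 : 1 - α n ≤ Real.exp (-(α n)) := by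
          have := Real.add_one_le_exp (-(α n)); linarith
        have h6 : (0:ℝ) ≤ Real.exp (-(∑ i ∈ Finset.Ico N n, α i)) := (Real.exp_pos _).le
        have hsplit : (∑ i ∈ Finset.Ico N (n+1), α i)
            = (∑ i ∈ Finset.Ico N n, α i) + α n := Finset.sum_Ico_succ_top hn _
        have hexp : Real.exp (-(∑ i ∈ Finset.Ico N (n+1), α i))
            = Real.exp (-(∑ i ∈ Finset.Ico N n, α i)) * Real.exp (-(α n)) := by
          rw [hsplit, neg_add, Real.exp_add]
        rw [hexp]
        have haN : 0 ≤ a N := ha N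
        have h7 : (1 - α n) * a n ≤ (1 - α n) * (ε/2 + Real.exp (-(∑ i ∈ Finset.Ico N n, α i)) * a N) := by
          apply mul_le_mul_of_nonneg_left ih; linarith
        have h8 : (1 - α n) * (Real.exp (-(∑ i ∈ Finset.Ico N n, α i)) * a N)
            ≤ Real.exp (-(∑ i ∈ Finset.Ico N n, α i)) * Real.exp (-(α n)) * a N := by
          rw [← mul_assoc]
          apply mul_le_mul_of_nonneg_right _ haN
          calc (1 - α n) * Real.exp (-(∑ i ∈ Finset.Ico N n, α i))
              ≤ Real.exp (-(α n)) * Real.exp (-(∑ i ∈ Finset.Ico N n, α i)) :=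
                mul_le_mul_of_nonneg_right h5 h6
            _ = Real.exp (-(∑ i ∈ Finset.Ico N n, α i)) * Real.exp (-(α n)) := mul_comm _ _
        nlinarith [mul_le_mul_of_nonneg_left h2 h3.le]
    have hS : Tendsto (fun n => ∑ i ∈ Finset.Ico N n, α i) atTop atTop := by
      have h2 := tendsto_atTop_add_const_right atTop (-(∑ i ∈ Finset.range N, α i)) hsum
      refine Tendsto.congr' ?_ h2
      filter_upwards [eventually_ge_atTop N] with n hn
      rw [← sub_eq_add_neg]
      exact (Finset.sum_Ico_eq_sub _ hn).symm
    have hexp0 : Tendsto (fun n => Real.exp (-(∑ i ∈ Finset.Ico N n, α i)) * a N) atTop (nhds 0) := by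
      have h1 : Tendsto (fun n => Real.exp (-(∑ i ∈ Finset.Ico N n, α i))) atTop (nhds 0) :=
        Real.tendsto_exp_atBot.comp (tendsto_neg_atTop_atBot.comp hS)
      simpa using h1.mul_const (a N)
    have hev : ∀ᶠ n in atTop, Real.exp (-(∑ i ∈ Finset.Ico N n, α i)) * a N < ε/2 := by
      rw [Metric.tendsto_atTop] at hexp0
      obtain ⟨M, hM⟩ := hexp0 (ε/2) (by positivity)
      filter_upwards [eventually_ge_atTop M] with n hn
      have := hM n hn
      rw [Real.dist_eq, sub_zero] at this
      exact lt_of_abs_lt this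
    filter_upwards [hev, eventually_ge_atTop N] with n h1 h2
    have := claim n h2
    linarith
  rw [NormedAddCommGroup.tendsto_nhds_zero]
  intro ε hε
  filter_upwards [main ε hε] with n hn
  rw [Real.norm_eq_abs, abs_of_nonneg (ha n)]
  exact hn

/-- fixed point set of a nonexpansive map is convex -/
lemma fix_convex {H : Type*} [NormedAddCommGroup H] [InnerProductSpace ℝ H]
    (T : H → H) (hT : ∀ x y : H, ‖T x - T y‖ ≤ ‖x - y‖) :
    Convex ℝ {x : H | T x = x} := by
  intro x hx y hy s t hs ht hst
  simp only [Set.mem_setOf_eq] at hx hy ⊢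
  set z := s • x + t • y with hz
  have hzx : z - x = t • (y - x) := by rw [hz]; rw [show s = 1 - t by linarith]; module
  have hzy : z - y = s • (x - y) := by rw [hz]; rw [show t = 1 - s by linarith]; module
  have h1 : ‖T z - x‖ ≤ t * ‖x - y‖ := by
    calc ‖T z - x‖ = ‖T z - T x‖ := by rw [hx]
      _ ≤ ‖z - x‖ := hT z x
      _ = t * ‖x - y‖ := by rw [hzx, norm_smul, Real.norm_eq_abs, abs_of_nonneg ht, norm_sub_rev]
  have h2 : ‖T z - y‖ ≤ s * ‖x - y‖ := by
    calc ‖T z - y‖ = ‖T z - T y‖ := by rw [hy]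
      _ ≤ ‖z - y‖ := hT z y
      _ = s * ‖x - y‖ := by rw [hzy, norm_smul, Real.norm_eq_abs, abs_of_nonneg hs]
  set a := T z - x with hA
  set b := T z - y with hB
  have hab : a - b = y - x := by rw [hA, hB]; abel
  have hTz : T z - z = s • a + t • b := by
    have hh : s • a + t • b = (s+t) • T z - (s • x + t • y) := by rw [hA, hB]; module
    rw [hh, hst, one_smul, ← hz]
  have key : ‖T z - z‖^2 ≤ 0 := by
    have e1 : ‖s • a + t • b‖^2 = s^2*‖a‖^2 + 2*(s*t)*⟪a,b⟫ + t^2*‖b‖^2 := by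
      rw [norm_add_sq_real, real_inner_smul_left, real_inner_smul_right, norm_smul, norm_smul,
        mul_pow, mul_pow, Real.norm_eq_abs, Real.norm_eq_abs, sq_abs, sq_abs]
      ring
    have e2 : ‖a - b‖^2 = ‖a‖^2 - 2*⟪a,b⟫ + ‖b‖^2 := norm_sub_sq_real a b
    have e3 : ‖a - b‖ = ‖x - y‖ := by rw [hab, norm_sub_rev]
    have h1' : ‖a‖^2 ≤ t^2 * ‖x-y‖^2 := by nlinarith [norm_nonneg a, norm_nonneg (x-y)]
    have h2' : ‖b‖^2 ≤ s^2 * ‖x-y‖^2 := by nlinarith [norm_nonneg b, norm_nonneg (x-y)]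
    have h3 : 2*⟪a,b⟫ = ‖a‖^2 + ‖b‖^2 - ‖x-y‖^2 := by rw [← e3, e2]; ring
    rw [hTz, e1]
    have key2 : s^2*‖a‖^2 + 2*(s*t)*⟪a,b⟫ + t^2*‖b‖^2
        = s*‖a‖^2 + t*‖b‖^2 - s*t*‖x-y‖^2 := by
      linear_combination (s*t)*h3 + (s*‖a‖^2 + t*‖b‖^2)*hst
    rw [key2]
    have h9 : s*(t^2*‖x-y‖^2) + t*(s^2*‖x-y‖^2) = s*t*‖x-y‖^2 := by
      linear_combination (s*t*‖x-y‖^2)*hst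
    have h10 := mul_le_mul_of_nonneg_left h1' hs
    have h11 := mul_le_mul_of_nonneg_left h2' ht
    linarith
  have hz0 : T z - z = 0 := by
    have h0 := sq_nonneg ‖T z - z‖
    have hn : ‖T z - z‖^2 = 0 := le_antisymm key h0
    have : ‖T z - z‖ = 0 := by nlinarith [norm_nonneg (T z - z)]
    exact norm_eq_zero.mp this
  exact sub_eq_zero.mp hz0


lemma weak_subseq {H : Type*} [NormedAddCommGroup H] [InnerProductSpace ℝ H] [CompleteSpace H]
    (x : ℕ → H) (C : ℝ) (hx : ∀ n, ‖x n‖ ≤ C) :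
    ∃ (z : H) (φ : ℕ → ℕ), StrictMono φ ∧
      ∀ y : H, Tendsto (fun k => ⟪x (φ k), y⟫) atTop (nhds ⟪z, y⟫) := by
  have hC : 0 ≤ C := le_trans (norm_nonneg _) (hx 0)
  -- Step 1: diagonal subsequence via compactness of [-C²,C²]^ℕ
  set g : ℕ → ℕ → ℝ := fun k m => ⟪x k, x m⟫ with hg
  have hgmem : ∀ k, g k ∈ Set.pi Set.univ (fun _ : ℕ => Set.Icc (-(C*C)) (C*C)) := by
    intro k m _
    have h1 := abs_real_inner_le_norm (x k) (x m)
    have h2 : ‖x k‖ * ‖x m‖ ≤ C * C :=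
      mul_le_mul (hx k) (hx m) (norm_nonneg _) hC
    exact abs_le.mp (le_trans h1 h2)
  have hcomp : IsCompact (Set.pi Set.univ (fun _ : ℕ => Set.Icc (-(C*C)) (C*C))) :=
    isCompact_univ_pi fun _ => isCompact_Icc
  obtain ⟨aLim, -, φ, hφ, hconv⟩ := hcomp.tendsto_subseq hgmem
  have hpt : ∀ m, Tendsto (fun k => ⟪x (φ k), x m⟫) atTop (nhds (aLim m)) := by
    intro m
    exact (tendsto_pi_nhds.mp hconv) m
  -- Step 2: the separable-ish closed subspace
  set D := (Submodule.span ℝ (Set.range x)).topologicalClosure with hD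
  haveI : CompleteSpace D := (Submodule.isClosed_topologicalClosure _).completeSpace_coe
  have hxD : ∀ n, x n ∈ D := fun n =>
    Submodule.le_topologicalClosure _ (Submodule.subset_span ⟨n, rfl⟩)
  have hspan : ∀ y ∈ Submodule.span ℝ (Set.range x),
      ∃ l, Tendsto (fun k => ⟪x (φ k), y⟫) atTop (nhds l) := by
    intro y hy
    induction hy using Submodule.span_induction with
    | mem y hy => obtain ⟨m, rfl⟩ := hy; exact ⟨aLim m, hpt m⟩
    | zero => exact ⟨0, by simpa using (tendsto_const_nhds : Tendsto (fun _ : ℕ => (0:ℝ)) atTop _)⟩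
    | add y₁ y₂ h₁ h₂ ih₁ ih₂ =>
      obtain ⟨l₁, hl₁⟩ := ih₁
      obtain ⟨l₂, hl₂⟩ := ih₂
      exact ⟨l₁ + l₂, by simpa [inner_add_right] using hl₁.add hl₂⟩
    | smul r y h ih =>
      obtain ⟨l, hl⟩ := ih
      exact ⟨r * l, by simpa [real_inner_smul_right] using hl.const_mul r⟩
  have hcauchyD : ∀ y : H, y ∈ D → CauchySeq (fun k => ⟪x (φ k), y⟫) := by
    intro y hy
    rw [Metric.cauchySeq_iff]
    intro ε hε
    have hyc : y ∈ closure ((Submodule.span ℝ (Set.range x) : Submodule ℝ H) : Set H) := hy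
    obtain ⟨y', hy'span, hy'near⟩ := Metric.mem_closure_iff.mp hyc (ε/(4*C+2)) (by positivity)
    obtain ⟨l, hl⟩ := hspan y' hy'span
    have hcs := hl.cauchySeq
    rw [Metric.cauchySeq_iff] at hcs
    obtain ⟨N, hN⟩ := hcs (ε/2) (by positivity)
    refine ⟨N, fun k hk j hj => ?_⟩
    have hbnd : ∀ i, |⟪x (φ i), y - y'⟫| ≤ C * (ε/(4*C+2)) := by
      intro i
      refine le_trans (abs_real_inner_le_norm _ _) ?_
      have h1 : ‖y - y'‖ ≤ ε/(4*C+2) := by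
        rw [← dist_eq_norm]; exact le_of_lt hy'near
      exact mul_le_mul (hx _) h1 (norm_nonneg _) hC
    have key : ∀ i, ⟪x (φ i), y⟫ = ⟪x (φ i), y'⟫ + ⟪x (φ i), y - y'⟫ := by
      intro i; rw [← inner_add_right]; norm_num
    have hNkj := hN k hk j hj
    rw [Real.dist_eq] at hNkj ⊢
    have e1 := hbnd k
    have e2 := hbnd j
    have hC2 : C * (ε/(4*C+2)) < ε/4 := by
      rw [show C * (ε/(4*C+2)) = (C*ε)/(4*C+2) by ring,
        div_lt_div_iff₀ (by positivity) (by norm_num : (0:ℝ) < 4)]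
      nlinarith
    rw [key k, key j]
    have : |⟪x (φ k), y'⟫ + ⟪x (φ k), y - y'⟫ - (⟪x (φ j), y'⟫ + ⟪x (φ j), y - y'⟫)|
        ≤ |⟪x (φ k), y'⟫ - ⟪x (φ j), y'⟫| + |⟪x (φ k), y - y'⟫| + |⟪x (φ j), y - y'⟫| := by
      have := abs_add_le (⟪x (φ k), y'⟫ - ⟪x (φ j), y'⟫ + ⟪x (φ k), y - y'⟫) (-⟪x (φ j), y - y'⟫)
      have h2 := abs_add_le (⟪x (φ k), y'⟫ - ⟪x (φ j), y'⟫) (⟪x (φ k), y - y'⟫)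
      rw [abs_neg] at this
      calc |⟪x (φ k), y'⟫ + ⟪x (φ k), y - y'⟫ - (⟪x (φ j), y'⟫ + ⟪x (φ j), y - y'⟫)|
          = |⟪x (φ k), y'⟫ - ⟪x (φ j), y'⟫ + ⟪x (φ k), y - y'⟫ + -⟪x (φ j), y - y'⟫| := by ring_nf
        _ ≤ _ := by linarith [this, h2]
    linarith
  have hcauchy : ∀ y : H, CauchySeq (fun k => ⟪x (φ k), y⟫) := by
    intro y
    have hyd : ((Submodule.orthogonalProjectionOnto D y : D) : H) ∈ D := (Submodule.orthogonalProjectionOnto D y).2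
    have heq : (fun k => ⟪x (φ k), y⟫)
        = fun k => ⟪x (φ k), ((Submodule.orthogonalProjectionOnto D y : D) : H)⟫ := by
      funext k
      have hperp : y - (Submodule.orthogonalProjectionOnto D y : D) ∈ Dᗮ :=
        Submodule.sub_starProjection_mem_orthogonal (K := D) y
      have h0 : ⟪x (φ k), y - ((Submodule.orthogonalProjectionOnto D y : D) : H)⟫ = 0 :=
        (Submodule.mem_orthogonal D _).mp hperp (x (φ k)) (hxD _)
      rw [inner_sub_right] at h0
      linarith
    rw [heq]
    exact hcauchyD _ hyd
  set ℓ : H → ℝ := fun y => limUnder atTop (fun k => ⟪x (φ k), y⟫) with hℓ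
  have htend : ∀ y, Tendsto (fun k => ⟪x (φ k), y⟫) atTop (nhds (ℓ y)) := fun y =>
    (hcauchy y).tendsto_limUnder
  have hadd : ∀ y₁ y₂, ℓ (y₁ + y₂) = ℓ y₁ + ℓ y₂ := by
    intro y₁ y₂
    have h2 : Tendsto (fun k => ⟪x (φ k), y₁ + y₂⟫) atTop (nhds (ℓ y₁ + ℓ y₂)) := by
      simpa [inner_add_right] using (htend y₁).add (htend y₂)
    exact tendsto_nhds_unique (htend _) h2
  have hsmul : ∀ (r : ℝ) (y : H), ℓ (r • y) = r * ℓ y := by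
    intro r y
    have h2 : Tendsto (fun k => ⟪x (φ k), r • y⟫) atTop (nhds (r * ℓ y)) := by
      simpa [real_inner_smul_right] using (htend y).const_mul r
    exact tendsto_nhds_unique (htend _) h2
  have hbound : ∀ y, |ℓ y| ≤ C * ‖y‖ := by
    intro y
    have hb : ∀ k, |⟪x (φ k), y⟫| ≤ C * ‖y‖ := fun k =>
      le_trans (abs_real_inner_le_norm _ _)
        (mul_le_mul_of_nonneg_right (hx _) (norm_nonneg _))
    exact le_of_tendsto (htend y).abs (Eventually.of_forall hb)
  let Llin : H →ₗ[ℝ] ℝ := { toFun := ℓ, map_add' := hadd, map_smul' := hsmul }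
  let L : H →L[ℝ] ℝ := LinearMap.mkContinuous Llin C (fun y => by
    simpa [Real.norm_eq_abs, Llin] using hbound y)
  refine ⟨(InnerProductSpace.toDual ℝ H).symm L, φ, hφ, fun y => ?_⟩
  have hz : ⟪(InnerProductSpace.toDual ℝ H).symm L, y⟫ = L y :=
    InnerProductSpace.toDual_symm_apply
  rw [hz]
  exact htend y


lemma demiclosed {H : Type*} [NormedAddCommGroup H] [InnerProductSpace ℝ H]
    (T : H → H) (hT : ∀ x y : H, ‖T x - T y‖ ≤ ‖x - y‖)
    (v : ℕ → H) (z : H)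
    (hweak : ∀ y : H, Tendsto (fun k => ⟪v k, y⟫) atTop (nhds ⟪z, y⟫))
    (hbd : ∃ M, ∀ k, ‖v k - z‖ ≤ M)
    (hasym : Tendsto (fun k => ‖v k - T (v k)‖) atTop (nhds 0)) :
    T z = z := by
  obtain ⟨M, hM⟩ := hbd
  set w : H := z - T z with hw
  have key : ∀ k, ‖w‖^2 ≤ ‖v k - T (v k)‖^2 + 2*‖v k - T (v k)‖*‖v k - z‖
      - 2*⟪v k - z, w⟫ := by
    intro k
    have h1 : ‖v k - T z‖ ≤ ‖v k - T (v k)‖ + ‖v k - z‖ := by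
      calc ‖v k - T z‖ ≤ ‖v k - T (v k)‖ + ‖T (v k) - T z‖ := by
            have := norm_add_le (v k - T (v k)) (T (v k) - T z)
            simpa using this
        _ ≤ ‖v k - T (v k)‖ + ‖v k - z‖ := by linarith [hT (v k) z]
    have h2 : ‖v k - T z‖^2 = ‖v k - z‖^2 + 2*⟪v k - z, w⟫ + ‖w‖^2 := by
      have e : v k - T z = (v k - z) + w := by rw [hw]; abel
      rw [e, norm_add_sq_real]
    nlinarith [norm_nonneg (v k - T z), norm_nonneg (v k - T (v k)), norm_nonneg (v k - z),
      sq_nonneg (‖v k - T (v k)‖ + ‖v k - z‖)]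
  have hR : Tendsto (fun k => ‖v k - T (v k)‖^2 + 2*‖v k - T (v k)‖*‖v k - z‖
      - 2*⟪v k - z, w⟫) atTop (nhds 0) := by
    have t1 : Tendsto (fun k => ‖v k - T (v k)‖^2) atTop (nhds 0) := by
      simpa using hasym.mul hasym |>.congr (fun k => (sq ‖v k - T (v k)‖).symm ▸ rfl)
    have t2 : Tendsto (fun k => 2*‖v k - T (v k)‖*‖v k - z‖) atTop (nhds 0) := by
      apply squeeze_zero (fun k => by positivity) (g := fun k => 2*‖v k - T (v k)‖*M)
      · intro k
        have h0 : 0 ≤ 2*‖v k - T (v k)‖ := by positivity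
        exact mul_le_mul_of_nonneg_left (hM k) h0
      · simpa using (hasym.const_mul 2).mul_const M
    have t3 : Tendsto (fun k => ⟪v k - z, w⟫) atTop (nhds 0) := by
      have := (hweak w).sub_const ⟪z, w⟫
      simp only [sub_self] at this
      refine this.congr fun k => ?_
      rw [inner_sub_left]
    have := (t1.add t2).sub (t3.const_mul 2)
    simp only [add_zero, sub_zero, mul_zero, zero_sub, neg_zero] at this
    refine this.congr fun k => by ring
  have h0 : ‖w‖^2 ≤ 0 := ge_of_tendsto hR (Eventually.of_forall key)
  have : ‖w‖ = 0 := by nlinarith [norm_nonneg w, sq_nonneg ‖w‖]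
  have := norm_eq_zero.mp this
  rw [hw] at this
  exact (sub_eq_zero.mp this).symm

set_option maxHeartbeats 8000000 in
/-- Yamada's theorem (single nonexpansive mapping): the hybrid steepest descent method
converges strongly to the unique solution of VIP(F, Fix T). -/
theorem hsdm_single_convergence
    {H : Type*} [NormedAddCommGroup H] [InnerProductSpace ℝ H] [CompleteSpace H]
    (T : H → H) (hT : ∀ x y : H, ‖T x - T y‖ ≤ ‖x - y‖)
    (hfix : ∃ p : H, T p = p)
    (κ η : ℝ) (hκ : 0 < κ) (hη : 0 < η)
    (F : H → H)
    (hFlip : ∀ x ∈ Set.range T, ∀ y ∈ Set.range T, ‖F x - F y‖ ≤ κ * ‖x - y‖)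
    (hFmon : ∀ x ∈ Set.range T, ∀ y ∈ Set.range T, η * ‖x - y‖ ^ 2 ≤ ⟪F x - F y, x - y⟫)
    (μ : ℝ) (hμ : μ ∈ Set.Ioo (0 : ℝ) (2 * η / κ ^ 2))
    (lam : ℕ → ℝ) (hlam : ∀ n, lam n ∈ Set.Ioc (0 : ℝ) 1)
    (hlam0 : Filter.Tendsto lam Filter.atTop (nhds 0))
    (hdiv : Filter.Tendsto (fun n => ∑ i ∈ Finset.Icc 1 n, lam i) Filter.atTop Filter.atTop)
    (hratio : Filter.Tendsto (fun n => (lam n - lam (n + 1)) / (lam n) ^ 2)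
      Filter.atTop (nhds 0))
    (u₀ : H) (u : ℕ → H) (hu0 : u 0 = u₀)
    (hrec : ∀ n, u (n + 1) = T (u n) - (lam (n + 1) * μ) • F (T (u n))) :
    ∃ ustar : H,
      (T ustar = ustar ∧ ∀ v, T v = v → 0 ≤ ⟪v - ustar, F ustar⟫) ∧
      (∀ w, T w = w → (∀ v, T v = v → 0 ≤ ⟪v - w, F w⟫) → w = ustar) ∧
      Filter.Tendsto u Filter.atTop (nhds ustar) := by
  classical
  obtain ⟨p, hp⟩ := hfix
  obtain ⟨hμ0, hμ2⟩ := hμ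
  have hκ2 : (0:ℝ) < κ^2 := by positivity
  have hμκ : μ * κ^2 < 2*η := (lt_div_iff₀ hκ2).mp hμ2
  set θ : ℝ := μ * (2*η - μ*κ^2) with hθdef
  have hθpos : 0 < θ := by apply mul_pos hμ0; linarith
  set c : ℝ := min θ 1 / 2 with hcdef
  have hminpos : 0 < min θ 1 := lt_min hθpos one_pos
  have hcpos : 0 < c := by rw [hcdef]; linarith
  have hc2 : 2*c ≤ θ := by have := min_le_left θ 1; rw [hcdef]; linarith
  have hc1 : c ≤ 1/2 := by have := min_le_right θ 1; rw [hcdef]; linarith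
  -- the key contraction estimate
  have key : ∀ l : ℝ, 0 < l → l ≤ 1 → ∀ x, x ∈ Set.range T → ∀ y, y ∈ Set.range T →
      ‖(x - (l*μ) • F x) - (y - (l*μ) • F y)‖ ≤ (1 - l*c) * ‖x - y‖ := by
    intro l hl0 hl1 x hx y hy
    have hmono := hFmon x hx y hy
    have hlip := hFlip x hx y hy
    have hrw : (x - (l*μ) • F x) - (y - (l*μ) • F y) = (x - y) - (l*μ) • (F x - F y) := by
      rw [smul_sub]; abel
    have expand : ‖(x - (l*μ) • F x) - (y - (l*μ) • F y)‖^2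
        = ‖x - y‖^2 - 2*(l*μ)*⟪F x - F y, x - y⟫ + (l*μ)^2*‖F x - F y‖^2 := by
      rw [hrw, norm_sub_sq_real, real_inner_smul_right, norm_smul, Real.norm_eq_abs, mul_pow,
        sq_abs, real_inner_comm]
      ring
    have hFsq : ‖F x - F y‖^2 ≤ κ^2 * ‖x - y‖^2 := by
      nlinarith [norm_nonneg (F x - F y), norm_nonneg (x - y)]
    have sq_bound : ‖(x - (l*μ) • F x) - (y - (l*μ) • F y)‖^2 ≤ ((1 - l*c) * ‖x - y‖)^2 := by
      rw [expand]
      have e1 : (l*μ)^2*‖F x - F y‖^2 ≤ l*(μ^2*κ^2)*‖x - y‖^2 := by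
        have h2 : (l*μ)^2*‖F x - F y‖^2 ≤ (l*μ)^2*(κ^2*‖x-y‖^2) :=
          mul_le_mul_of_nonneg_left hFsq (by positivity)
        have hll : (0:ℝ) ≤ l - l^2 := by nlinarith
        have hprod := mul_nonneg hll
          (mul_nonneg (mul_nonneg (sq_nonneg μ) (sq_nonneg κ)) (sq_nonneg ‖x-y‖))
        nlinarith [hprod]
      have e2 : 2*(l*μ)*(η*‖x-y‖^2) ≤ 2*(l*μ)*⟪F x - F y, x - y⟫ :=
        mul_le_mul_of_nonneg_left hmono (by positivity)
      have hstep : 2*c*(l*‖x-y‖^2) ≤ θ*(l*‖x-y‖^2) :=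
        mul_le_mul_of_nonneg_right hc2 (by positivity)
      have hθmul : θ*(l*‖x-y‖^2) = 2*μ*η*(l*‖x-y‖^2) - μ^2*κ^2*(l*‖x-y‖^2) := by
        rw [hθdef]; ring
      have hgoal : ‖x - y‖^2 - 2*(l*μ)*⟪F x - F y, x - y⟫ + (l*μ)^2*‖F x - F y‖^2
          ≤ ‖x - y‖^2 - 2*c*(l*‖x-y‖^2) + (l*c*‖x-y‖)^2 := by nlinarith [e1, e2, hstep, hθmul]
      have hring : ((1 - l*c) * ‖x - y‖)^2 = ‖x - y‖^2 - 2*c*(l*‖x-y‖^2) + (l*c*‖x-y‖)^2 := by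
        ring
      rw [hring]
      exact hgoal
    calc ‖(x - (l*μ) • F x) - (y - (l*μ) • F y)‖
        = Real.sqrt (‖(x - (l*μ) • F x) - (y - (l*μ) • F y)‖^2) :=
          (Real.sqrt_sq (norm_nonneg _)).symm
      _ ≤ Real.sqrt (((1 - l*c) * ‖x - y‖)^2) := Real.sqrt_le_sqrt sq_bound
      _ = (1 - l*c) * ‖x - y‖ := Real.sqrt_sq (mul_nonneg (by nlinarith) (norm_nonneg _))
  -- the fixed point set
  set K : Set H := {q : H | T q = q} with hKdef
  have hKne : K.Nonempty := ⟨p, hp⟩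
  have hTcont : Continuous T := by
    have hlip : LipschitzWith 1 T := LipschitzWith.of_dist_le_mul (by
      intro a b; rw [dist_eq_norm, dist_eq_norm]; simpa using hT a b)
    exact hlip.continuous
  have hKclosed : IsClosed K := by
    have he : K = (fun q => T q - q) ⁻¹' {0} := by
      ext q; simp [hKdef, sub_eq_zero]
    rw [he]
    exact IsClosed.preimage (hTcont.sub continuous_id) isClosed_singleton
  have hKconv : Convex ℝ K := fix_convex T hT
  have hKrange : ∀ q, q ∈ K → q ∈ Set.range T := fun q hq => ⟨q, hq⟩
  -- the metric projection onto K
  have hproj : ∀ z : H, ∃ v, v ∈ K ∧ ∀ q ∈ K, ⟪z - v, q - v⟫ ≤ 0 := by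
    intro z
    obtain ⟨v, hvK, hvmin⟩ :=
      exists_norm_eq_iInf_of_complete_convex hKne hKclosed.isComplete hKconv z
    exact ⟨v, hvK, (norm_eq_iInf_iff_real_inner_le_zero hKconv hvK).mp hvmin⟩
  choose P hPK hPchar using hproj
  have hPnon : ∀ z z' : H, ‖P z - P z'‖ ≤ ‖z - z'‖ := by
    intro z z'
    have h1 := hPchar z (P z') (hPK z')
    have h2 := hPchar z' (P z) (hPK z)
    have e : ⟪z - P z, P z' - P z⟫ + ⟪z' - P z', P z - P z'⟫
        = ⟪(P z - P z') - (z - z'), P z - P z'⟫ := by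
      have h3 : (P z' - P z : H) = -(P z - P z') := by abel
      rw [h3, inner_neg_right]
      rw [show -(⟪z - P z, P z - P z'⟫) + ⟪z' - P z', P z - P z'⟫
          = ⟪z' - P z', P z - P z'⟫ - ⟪z - P z, P z - P z'⟫ from by ring,
        ← inner_sub_left]
      congr 1
      abel
    have e2 : ⟪(P z - P z') - (z - z'), P z - P z'⟫
        = ‖P z - P z'‖^2 - ⟪z - z', P z - P z'⟫ := by
      rw [inner_sub_left, real_inner_self_eq_norm_sq]
    have key2 : ‖P z - P z'‖^2 ≤ ⟪z - z', P z - P z'⟫ := by linarith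
    have hcs := real_inner_le_norm (z - z') (P z - P z')
    nlinarith [norm_nonneg (P z - P z'), norm_nonneg (z - z')]
  -- construction of ustar via Banach fixed point of S = P ∘ (I - μ F)
  set S : H → H := fun q => P (q - μ • F q) with hSdef
  have hSK : ∀ q, S q ∈ K := fun q => hPK _
  have hScon : ∀ q, q ∈ K → ∀ q', q' ∈ K → ‖S q - S q'‖ ≤ (1 - c) * ‖q - q'‖ := by
    intro q hq q' hq'
    have h1 : ‖S q - S q'‖ ≤ ‖(q - μ • F q) - (q' - μ • F q')‖ := hPnon _ _
    have h2 := key 1 one_pos le_rfl q (hKrange q hq) q' (hKrange q' hq')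
    simp only [one_mul] at h2
    calc ‖S q - S q'‖ ≤ ‖(q - μ • F q) - (q' - μ • F q')‖ := h1
      _ ≤ (1 - c) * ‖q - q'‖ := h2
  set w : ℕ → H := fun n => S^[n] (S p) with hwdef
  have hwsucc : ∀ n, w (n+1) = S (w n) := fun n => Function.iterate_succ_apply' S n (S p)
  have hwK : ∀ n, w n ∈ K := by
    intro n
    induction n with
    | zero => exact hSK p
    | succ n ih => rw [hwsucc n]; exact hSK _
  have hgeo : ∀ n, ‖w (n+1) - w n‖ ≤ ‖w 1 - w 0‖ * (1-c)^n := by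
    intro n
    induction n with
    | zero => simp
    | succ n ih =>
      have h1 : ‖w (n+2) - w (n+1)‖ ≤ (1-c) * ‖w (n+1) - w n‖ := by
        have h0 := hScon (w (n+1)) (hwK (n+1)) (w n) (hwK n)
        rw [← hwsucc (n+1), ← hwsucc n] at h0
        exact h0
      calc ‖w (n+2) - w (n+1)‖ ≤ (1-c) * ‖w (n+1) - w n‖ := h1
        _ ≤ (1-c) * (‖w 1 - w 0‖ * (1-c)^n) := by
            apply mul_le_mul_of_nonneg_left ih; linarith
        _ = ‖w 1 - w 0‖ * (1-c)^(n+1) := by ring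
  have hwC : CauchySeq w := by
    apply cauchySeq_of_le_geometric (1-c) ‖w 1 - w 0‖ (by linarith)
    intro n
    rw [dist_eq_norm, norm_sub_rev]
    exact hgeo n
  obtain ⟨ustar, hustar⟩ := cauchySeq_tendsto_of_complete hwC
  have hustarK : ustar ∈ K := hKclosed.mem_of_tendsto hustar (Eventually.of_forall hwK)
  have hustarfix : T ustar = ustar := hustarK
  have hustarrange : ustar ∈ Set.range T := ⟨ustar, hustarfix⟩
  have hwnorm : Tendsto (fun n => ‖w n - ustar‖) atTop (nhds 0) :=
    tendsto_iff_norm_sub_tendsto_zero.mp hustar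
  have hSfix : P (ustar - μ • F ustar) = ustar := by
    have h1 : Tendsto (fun n => w (n+1)) atTop (nhds ustar) :=
      hustar.comp (tendsto_add_atTop_nat 1)
    have h2 : Tendsto (fun n => S (w n)) atTop (nhds (S ustar)) := by
      rw [tendsto_iff_norm_sub_tendsto_zero]
      apply squeeze_zero (fun n => norm_nonneg _)
        (g := fun n => (1-c) * ‖w n - ustar‖)
      · intro n; exact hScon _ (hwK n) _ hustarK
      · simpa using hwnorm.const_mul (1-c)
    have h3 : Tendsto (fun n => S (w n)) atTop (nhds ustar) := by
      refine h1.congr fun n => ?_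
      rw [hwsucc n]
    exact tendsto_nhds_unique h2 h3
  have hVIP : ∀ v, T v = v → 0 ≤ ⟪v - ustar, F ustar⟫ := by
    intro v hv
    have h1 := hPchar (ustar - μ • F ustar) v hv
    rw [hSfix] at h1
    have h2 : ⟪ustar - μ • F ustar - ustar, v - ustar⟫ = -(μ * ⟪F ustar, v - ustar⟫) := by
      rw [show (ustar - μ • F ustar - ustar : H) = -(μ • F ustar) by abel,
        inner_neg_left, real_inner_smul_left]
    rw [h2, neg_nonpos] at h1
    have h3 : 0 ≤ ⟪F ustar, v - ustar⟫ := by nlinarith [h1, hμ0]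
    rw [real_inner_comm]
    exact h3
  -- uniqueness
  have huniq : ∀ q, T q = q → (∀ v, T v = v → 0 ≤ ⟪v - q, F q⟫) → q = ustar := by
    intro q hq hqVIP
    have h1 := hqVIP ustar hustarfix
    have h2 := hVIP q hq
    have hmono := hFmon q ⟨q, hq⟩ ustar hustarrange
    have c1 : ⟪F q, q - ustar⟫ ≤ 0 := by
      rw [real_inner_comm] at h1
      rw [show (ustar - q : H) = -(q - ustar) by abel, inner_neg_right] at h1
      linarith
    have c2 : 0 ≤ ⟪F ustar, q - ustar⟫ := by
      rw [real_inner_comm] at h2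
      exact h2
    rw [inner_sub_left] at hmono
    have hns : η * ‖q - ustar‖^2 ≤ 0 := by linarith
    have hsq : ‖q - ustar‖^2 ≤ 0 := by nlinarith [sq_nonneg ‖q - ustar‖]
    have hle : ‖q - ustar‖ ≤ 0 := by nlinarith [norm_nonneg (q - ustar)]
    have hn0 : ‖q - ustar‖ = 0 := le_antisymm hle (norm_nonneg _)
    have := norm_eq_zero.mp hn0
    exact sub_eq_zero.mp this
  -- boundedness of the iterates
  set M : ℝ := max ‖u 0 - ustar‖ (μ * ‖F ustar‖ / c) with hMdef
  have hM0 : 0 ≤ M := le_trans (norm_nonneg _) (le_max_left _ _)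
  have hMB : μ * ‖F ustar‖ ≤ c * M := by
    have h1 : μ * ‖F ustar‖ / c ≤ M := le_max_right _ _
    rw [div_le_iff₀ hcpos] at h1
    linarith
  have hTnear : ∀ n, ‖T (u n) - ustar‖ ≤ ‖u n - ustar‖ := by
    intro n
    calc ‖T (u n) - ustar‖ = ‖T (u n) - T ustar‖ := by rw [hustarfix]
      _ ≤ ‖u n - ustar‖ := hT _ _
  have hbound : ∀ n, ‖u n - ustar‖ ≤ M := by
    intro n
    induction n with
    | zero => exact le_max_left _ _
    | succ n ih =>
      have hl := hlam (n+1)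
      have hrw2 : u (n+1) - ustar
          = ((T (u n) - (lam (n+1)*μ) • F (T (u n))) - (ustar - (lam (n+1)*μ) • F ustar))
            - (lam (n+1)*μ) • F ustar := by
        rw [hrec n]; abel
      have hkey := key (lam (n+1)) hl.1 hl.2 (T (u n)) ⟨u n, rfl⟩ ustar hustarrange
      have h1 : ‖u (n+1) - ustar‖ ≤ (1 - lam (n+1)*c) * ‖T (u n) - ustar‖
          + (lam (n+1)*μ) * ‖F ustar‖ := by
        rw [hrw2]
        refine le_trans (norm_sub_le _ _) ?_
        have h2 : ‖(lam (n+1)*μ) • F ustar‖ = (lam (n+1)*μ) * ‖F ustar‖ := by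
          rw [norm_smul, Real.norm_eq_abs, abs_of_nonneg (mul_nonneg hl.1.le hμ0.le)]
        rw [h2]
        exact add_le_add hkey le_rfl
      have h4 : (1 - lam (n+1)*c) * ‖T (u n) - ustar‖ ≤ (1 - lam (n+1)*c) * M := by
        apply mul_le_mul_of_nonneg_left (le_trans (hTnear n) ih)
        nlinarith [hl.1, hl.2]
      have h5 : (1 - lam (n+1)*c) * M + (lam (n+1)*μ) * ‖F ustar‖ ≤ M := by
        have h6 := mul_le_mul_of_nonneg_left hMB hl.1.le
        nlinarith [h6]
      linarith
  have hFB : ∀ n, ‖F (T (u n))‖ ≤ κ * M + ‖F ustar‖ := by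
    intro n
    have h1 := hFlip (T (u n)) ⟨u n, rfl⟩ ustar hustarrange
    have h2 : ‖T (u n) - ustar‖ ≤ M := le_trans (hTnear n) (hbound n)
    have h3 := mul_le_mul_of_nonneg_left h2 hκ.le
    calc ‖F (T (u n))‖ = ‖(F (T (u n)) - F ustar) + F ustar‖ := by congr 1; abel
      _ ≤ ‖F (T (u n)) - F ustar‖ + ‖F ustar‖ := norm_add_le _ _
      _ ≤ κ * M + ‖F ustar‖ := by linarith
  set B : ℝ := κ * M + ‖F ustar‖ with hBdef
  have hBnn : 0 ≤ B := le_trans (norm_nonneg _) (hFB 0)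
  have hμB : (0:ℝ) ≤ μ*B := mul_nonneg hμ0.le hBnn
  -- successive differences tend to zero
  set d : ℕ → ℝ := fun n => ‖u (n+1) - u n‖ with hddef
  have hdrec : ∀ n, d (n+1) ≤ (1 - lam (n+2)*c) * d n
      + |lam (n+1) - lam (n+2)| * (μ*B) := by
    intro n
    have hl2 := hlam (n+2)
    have hrw2 : u (n+2) - u (n+1)
        = ((T (u (n+1)) - (lam (n+2)*μ) • F (T (u (n+1))))
            - (T (u n) - (lam (n+2)*μ) • F (T (u n))))
          + ((lam (n+1) - lam (n+2)) * μ) • F (T (u n)) := by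
      rw [hrec (n+1), hrec n]
      module
    have hkey := key (lam (n+2)) hl2.1 hl2.2 (T (u (n+1))) ⟨u (n+1), rfl⟩ (T (u n)) ⟨u n, rfl⟩
    have h2 : ‖((lam (n+1) - lam (n+2)) * μ) • F (T (u n))‖
        ≤ |lam (n+1) - lam (n+2)| * (μ*B) := by
      rw [norm_smul, Real.norm_eq_abs, abs_mul, abs_of_nonneg hμ0.le, mul_assoc]
      exact mul_le_mul_of_nonneg_left
        (mul_le_mul_of_nonneg_left (hFB n) hμ0.le) (abs_nonneg _)
    have h1 : d (n+1) ≤ (1 - lam (n+2)*c) * ‖T (u (n+1)) - T (u n)‖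
        + |lam (n+1) - lam (n+2)| * (μ*B) := by
      show ‖u (n+2) - u (n+1)‖ ≤ _
      rw [hrw2]
      exact le_trans (norm_add_le _ _) (add_le_add hkey h2)
    have h3 : ‖T (u (n+1)) - T (u n)‖ ≤ d n := hT _ _
    have h4 : (0:ℝ) ≤ 1 - lam (n+2)*c := by nlinarith [hl2.1, hl2.2]
    have h5 := mul_le_mul_of_nonneg_left h3 h4
    linarith
  -- divergence of the shifted sums
  have hshift : ∀ (f : ℕ → ℝ), Tendsto (fun n => ∑ i ∈ Finset.range n, f i) atTop atTop →
      Tendsto (fun n => ∑ i ∈ Finset.range n, f (i+1)) atTop atTop := by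
    intro f hf
    have e : ∀ n, ∑ i ∈ Finset.range n, f (i+1) = (∑ i ∈ Finset.range (n+1), f i) - f 0 := by
      intro n
      rw [Finset.sum_range_succ']
      ring
    have t0 : Tendsto (fun n => ∑ i ∈ Finset.range (n+1), f i) atTop atTop :=
      hf.comp (tendsto_add_atTop_nat 1)
    have t1 : Tendsto (fun n => (∑ i ∈ Finset.range (n+1), f i) + -(f 0)) atTop atTop :=
      tendsto_atTop_add_const_right atTop (-(f 0)) t0
    refine t1.congr fun n => ?_
    rw [← sub_eq_add_neg, ← e n]
  have hdiv1 : Tendsto (fun n => ∑ i ∈ Finset.range n, lam (i+1)) atTop atTop := by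
    refine hdiv.congr fun n => ?_
    calc ∑ i ∈ Finset.Icc 1 n, lam i = ∑ i ∈ Finset.Ico 1 (n+1), lam i := by
          rw [Finset.Ico_add_one_right_eq_Icc]
      _ = ∑ i ∈ Finset.range (n+1-1), lam (1+i) := Finset.sum_Ico_eq_sum_range lam 1 (n+1)
      _ = ∑ i ∈ Finset.range n, lam (i+1) := by
          simp only [Nat.add_sub_cancel]
          exact Finset.sum_congr rfl fun i _ => by rw [Nat.add_comm]
  have hα1 : Tendsto (fun n => ∑ i ∈ Finset.range n, lam (i+1) * c) atTop atTop := by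
    have h' := hdiv1.atTop_mul_const hcpos
    refine h'.congr fun n => ?_
    rw [Finset.sum_mul]
  have hα2 : Tendsto (fun n => ∑ i ∈ Finset.range n, lam (i+2) * c) atTop atTop := by
    have := hshift (fun i => lam (i+1) * c) hα1
    refine this.congr fun n => ?_
    exact Finset.sum_congr rfl fun i _ => by norm_num
  -- Step B : d → 0 via Xu's lemma
  have hd0 : Tendsto d atTop (nhds 0) := by
    apply xu_lemma d (fun n => lam (n+2)*c)
      (fun n => |lam (n+1) - lam (n+2)| * (μ*B) / (lam (n+2)*c))
      (fun n => norm_nonneg _)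
    · intro n
      refine ⟨mul_pos (hlam (n+2)).1 hcpos, ?_⟩
      nlinarith [(hlam (n+2)).1, (hlam (n+2)).2]
    · exact hα2
    · intro n
      have hpos : (0:ℝ) < lam (n+2)*c := mul_pos (hlam (n+2)).1 hcpos
      have e : lam (n+2)*c * (|lam (n+1) - lam (n+2)| * (μ*B) / (lam (n+2)*c))
          = |lam (n+1) - lam (n+2)| * (μ*B) := by
        rw [mul_comm (lam (n+2)*c), div_mul_cancel₀ _ (ne_of_gt hpos)]
      rw [e]
      exact hdrec n
    · intro ε hε
      set δ : ℝ := min (1/2) (ε*c/(4*μ*B+2)) with hδdef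
      have hδ0 : 0 < δ := lt_min (by norm_num) (by positivity)
      have hδhalf : δ ≤ 1/2 := min_le_left _ _
      have hδ2 : δ*(4*μ*B+2) ≤ ε*c := by
        have hle : δ ≤ ε*c/(4*μ*B+2) := min_le_right _ _
        have h4 : (0:ℝ) < 4*μ*B+2 := by positivity
        calc δ*(4*μ*B+2) ≤ (ε*c/(4*μ*B+2))*(4*μ*B+2) :=
              mul_le_mul_of_nonneg_right hle h4.le
          _ = ε*c := div_mul_cancel₀ _ (ne_of_gt h4)
      have hev1 : ∀ᶠ n in atTop, |lam (n+1) - lam (n+2)| ≤ δ * (lam (n+1))^2 := by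
        have h := hratio.comp (tendsto_add_atTop_nat 1)
        have h2 := (NormedAddCommGroup.tendsto_nhds_zero.mp h) δ hδ0
        filter_upwards [h2] with n hn
        simp only [Function.comp_apply, Real.norm_eq_abs] at hn
        have hl1 := (hlam (n+1)).1
        rw [abs_div, abs_of_pos (by positivity : (0:ℝ) < (lam (n+1))^2),
          div_lt_iff₀ (by positivity : (0:ℝ) < (lam (n+1))^2)] at hn
        linarith
      filter_upwards [hev1] with n hn
      have hl1 := hlam (n+1)
      have hl2 := hlam (n+2)
      have hlow : lam (n+1) / 2 ≤ lam (n+2) := by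
        have h1 : lam (n+1) - lam (n+2) ≤ δ * (lam (n+1))^2 := le_trans (le_abs_self _) hn
        nlinarith [hl1.1, hl1.2]
      rw [div_le_iff₀ (mul_pos hl2.1 hcpos)]
      have s1 : |lam (n+1) - lam (n+2)| * (μ*B) ≤ (δ * lam (n+1)^2) * (μ*B) :=
        mul_le_mul_of_nonneg_right hn hμB
      have s2 : δ * lam (n+1)^2 ≤ δ * lam (n+1) := by
        have h5 : lam (n+1)^2 ≤ lam (n+1) := by nlinarith [hl1.1, hl1.2]
        exact mul_le_mul_of_nonneg_left h5 hδ0.le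
      have s3 : (δ * lam (n+1)^2) * (μ*B) ≤ (δ * lam (n+1)) * (μ*B) :=
        mul_le_mul_of_nonneg_right s2 hμB
      have s4 : (δ * lam (n+1)) * (μ*B) ≤ ε * (lam (n+2) * c) := by
        have e1 : lam (n+1) * (δ*(4*μ*B+2)) ≤ lam (n+1) * (ε*c) :=
          mul_le_mul_of_nonneg_left hδ2 hl1.1.le
        have e2 : ε * ((lam (n+1)/2)*c) ≤ ε * (lam (n+2)*c) := by
          apply mul_le_mul_of_nonneg_left _ hε.le
          exact mul_le_mul_of_nonneg_right hlow hcpos.le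
        nlinarith [mul_nonneg (mul_nonneg hδ0.le hl1.1.le) hμB,
          mul_nonneg hδ0.le hl1.1.le]
      linarith
  -- asymptotic fixed-point property
  have hTu0 : Tendsto (fun n => ‖u n - T (u n)‖) atTop (nhds 0) := by
    have hb : ∀ n, ‖u n - T (u n)‖ ≤ d n + lam (n+1) * (μ*B) := by
      intro n
      have h1 : ‖u (n+1) - T (u n)‖ ≤ lam (n+1) * (μ*B) := by
        rw [hrec n,
          show (T (u n) - (lam (n+1)*μ) • F (T (u n)) - T (u n) : H)
            = -((lam (n+1)*μ) • F (T (u n))) by abel,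
          norm_neg, norm_smul, Real.norm_eq_abs,
          abs_of_nonneg (mul_nonneg (hlam (n+1)).1.le hμ0.le)]
        have h2 := mul_le_mul_of_nonneg_left (hFB n)
          (mul_nonneg (hlam (n+1)).1.le hμ0.le)
        nlinarith [h2]
      have h3 : ‖u n - T (u n)‖ ≤ ‖u n - u (n+1)‖ + ‖u (n+1) - T (u n)‖ := by
        have := norm_add_le (u n - u (n+1)) (u (n+1) - T (u n))
        simpa using this
      have h4 : ‖u n - u (n+1)‖ = d n := norm_sub_rev _ _
      linarith
    apply squeeze_zero (fun n => norm_nonneg _) hb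
    have t2 : Tendsto (fun n => lam (n+1) * (μ*B)) atTop (nhds 0) := by
      have := (hlam0.comp (tendsto_add_atTop_nat 1)).mul_const (μ*B)
      simpa using this
    simpa using hd0.add t2
  -- Step C : limsup estimate via weak compactness and demiclosedness
  have hlimsup : ∀ δ : ℝ, 0 < δ → ∀ᶠ n in atTop, ⟪F ustar, ustar - T (u n)⟫ ≤ δ := by
    intro δ hδ
    by_contra hcon
    rw [Filter.not_eventually] at hcon
    have hfreq : ∃ᶠ n in atTop, δ < ⟪F ustar, ustar - T (u n)⟫ :=
      hcon.mono fun n hn => lt_of_not_ge hn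
    obtain ⟨ψ, hψmono, hψ⟩ := extraction_of_frequently_atTop hfreq
    set v : ℕ → H := fun k => T (u (ψ k)) with hvdef
    have hvnear : ∀ k, ‖v k - ustar‖ ≤ M := fun k => le_trans (hTnear (ψ k)) (hbound (ψ k))
    have hvb : ∀ k, ‖v k‖ ≤ M + ‖ustar‖ := by
      intro k
      calc ‖v k‖ = ‖(v k - ustar) + ustar‖ := by congr 1; abel
        _ ≤ ‖v k - ustar‖ + ‖ustar‖ := norm_add_le _ _
        _ ≤ M + ‖ustar‖ := by linarith [hvnear k]
    obtain ⟨z, φ', hφ'mono, hweak⟩ := weak_subseq v (M + ‖ustar‖) hvb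
    have hasym0 : Tendsto (fun n => ‖T (u n) - T (T (u n))‖) atTop (nhds 0) := by
      apply squeeze_zero (fun n => norm_nonneg _) (g := fun n => ‖u n - T (u n)‖)
      · intro n; exact hT _ _
      · exact hTu0
    have hasym : Tendsto (fun k => ‖v (φ' k) - T (v (φ' k))‖) atTop (nhds 0) := by
      have hmono2 : StrictMono (fun k => ψ (φ' k)) := hψmono.comp hφ'mono
      exact hasym0.comp hmono2.tendsto_atTop
    have hzfix : T z = z := by
      apply demiclosed T hT (fun k => v (φ' k)) z hweak _ hasym
      refine ⟨M + ‖ustar‖ + ‖z‖, fun k => ?_⟩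
      calc ‖v (φ' k) - z‖ ≤ ‖v (φ' k)‖ + ‖z‖ := norm_sub_le _ _
        _ ≤ M + ‖ustar‖ + ‖z‖ := by linarith [hvb (φ' k)]
    have h2t : Tendsto (fun k => ⟪F ustar, ustar - v (φ' k)⟫) atTop
        (nhds ⟪F ustar, ustar - z⟫) := by
      have h1 := hweak (F ustar)
      have h2 := (tendsto_const_nhds (x := ⟪F ustar, ustar⟫) (f := atTop)).sub h1
      have e : ⟪F ustar, ustar - z⟫ = ⟪F ustar, ustar⟫ - ⟪z, F ustar⟫ := by
        rw [inner_sub_right, real_inner_comm (F ustar) z]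
      rw [e]
      refine h2.congr fun k => ?_
      rw [inner_sub_right, real_inner_comm (F ustar) (v (φ' k))]
    have h3 : δ ≤ ⟪F ustar, ustar - z⟫ :=
      ge_of_tendsto h2t (Eventually.of_forall fun k => (hψ (φ' k)).le)
    have h4 := hVIP z hzfix
    have h5 : ⟪F ustar, ustar - z⟫ = -⟪z - ustar, F ustar⟫ := by
      rw [show (ustar - z : H) = -(z - ustar) by abel, inner_neg_right, real_inner_comm]
    linarith
  -- Step D : final Xu argument for ‖u n - ustar‖² → 0
  have haconv : Tendsto (fun n => ‖u n - ustar‖^2) atTop (nhds 0) := by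
    apply xu_lemma _ (fun n => lam (n+1)*c)
      (fun n => (2*μ*⟪F ustar, ustar - u (n+1)⟫ + lam (n+1)*μ^2*‖F ustar‖^2)/c)
      (fun n => sq_nonneg _)
    · intro n
      refine ⟨mul_pos (hlam (n+1)).1 hcpos, ?_⟩
      nlinarith [(hlam (n+1)).1, (hlam (n+1)).2]
    · exact hα1
    · intro n
      have hl := hlam (n+1)
      have hD : u (n+1) - ustar
          = ((T (u n) - (lam (n+1)*μ) • F (T (u n))) - (ustar - (lam (n+1)*μ) • F ustar))
            - (lam (n+1)*μ) • F ustar := by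
        rw [hrec n]; abel
      have hkey := key (lam (n+1)) hl.1 hl.2 (T (u n)) ⟨u n, rfl⟩ ustar hustarrange
      set Dn : H := (T (u n) - (lam (n+1)*μ) • F (T (u n)))
          - (ustar - (lam (n+1)*μ) • F ustar) with hDndef
      have expand : ‖u (n+1) - ustar‖^2
          = ‖Dn‖^2 - 2*(lam (n+1)*μ)*⟪Dn, F ustar⟫ + (lam (n+1)*μ)^2*‖F ustar‖^2 := by
        rw [hD, norm_sub_sq_real, real_inner_smul_right, norm_smul, Real.norm_eq_abs,
          mul_pow, sq_abs]
        ring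
      have hDn2 : Dn = (u (n+1) - ustar) + (lam (n+1)*μ) • F ustar := by
        rw [hDndef, hD]; module
      have hinner : ⟪Dn, F ustar⟫
          = ⟪u (n+1) - ustar, F ustar⟫ + (lam (n+1)*μ)*‖F ustar‖^2 := by
        rw [hDn2, inner_add_left, real_inner_smul_left, real_inner_self_eq_norm_sq]
      have hcomm : ⟪u (n+1) - ustar, F ustar⟫ = -⟪F ustar, ustar - u (n+1)⟫ := by
        rw [show (ustar - u (n+1) : H) = -(u (n+1) - ustar) by abel, inner_neg_right,
          real_inner_comm]
        ring
      have hDnorm : ‖Dn‖ ≤ (1 - lam (n+1)*c) * ‖u n - ustar‖ := by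
        refine le_trans hkey ?_
        apply mul_le_mul_of_nonneg_left (hTnear n)
        nlinarith [hl.1, hl.2]
      have hDsq : ‖Dn‖^2 ≤ (1 - lam (n+1)*c) * ‖u n - ustar‖^2 := by
        have h6 : (0:ℝ) ≤ 1 - lam (n+1)*c := by nlinarith [hl.1, hl.2]
        have h7 : (1 - lam (n+1)*c) ≤ 1 := by nlinarith [hl.1]
        have hr2 : (1 - lam (n+1)*c)^2 ≤ (1 - lam (n+1)*c) := by nlinarith [h6, h7]
        have h8 := mul_le_mul_of_nonneg_right hr2 (sq_nonneg ‖u n - ustar‖)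
        nlinarith [mul_self_le_mul_self (norm_nonneg Dn) hDnorm, h8]
      have e0 : lam (n+1)*c * ((2*μ*⟪F ustar, ustar - u (n+1)⟫
          + lam (n+1)*μ^2*‖F ustar‖^2)/c)
          = lam (n+1)*(2*μ*⟪F ustar, ustar - u (n+1)⟫
            + lam (n+1)*μ^2*‖F ustar‖^2) := by
        field_simp
      rw [e0, expand, hinner, hcomm]
      have hnn : (0:ℝ) ≤ (lam (n+1)*μ)^2*‖F ustar‖^2 := by positivity
      nlinarith [hDsq, hnn]
    · intro ε hε
      set R : ℝ := 2*μ^2*‖F ustar‖*B + μ^2*‖F ustar‖^2 with hRdef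
      have hR : 0 ≤ R := by
        have r1 : (0:ℝ) ≤ 2*μ^2*‖F ustar‖ := by positivity
        have r2 : (0:ℝ) ≤ 2*μ^2*‖F ustar‖*B := mul_nonneg r1 hBnn
        have r3 : (0:ℝ) ≤ μ^2*‖F ustar‖^2 := by positivity
        rw [hRdef]; linarith
      have hsplit : ∀ n, ⟪F ustar, ustar - u (n+1)⟫
          ≤ ⟪F ustar, ustar - T (u n)⟫ + lam (n+1)*(μ*(‖F ustar‖*B)) := by
        intro n
        have e : ustar - u (n+1) = (ustar - T (u n)) + (lam (n+1)*μ) • F (T (u n)) := by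
          rw [hrec n]; abel
        rw [e, inner_add_right, real_inner_smul_right]
        have hcs := real_inner_le_norm (F ustar) (F (T (u n)))
        have h2 : ⟪F ustar, F (T (u n))⟫ ≤ ‖F ustar‖*B :=
          le_trans hcs (mul_le_mul_of_nonneg_left (hFB n) (norm_nonneg _))
        have h3 := mul_le_mul_of_nonneg_left h2
          (mul_nonneg (hlam (n+1)).1.le hμ0.le)
        nlinarith [h3]
      have hev2 : ∀ᶠ n in atTop, lam (n+1) ≤ (ε*c)/(2*(R+1)) := by
        have h := hlam0.comp (tendsto_add_atTop_nat 1)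
        have h2 := (NormedAddCommGroup.tendsto_nhds_zero.mp h)
          ((ε*c)/(2*(R+1))) (by positivity)
        filter_upwards [h2] with n hn
        simp only [Function.comp_apply, Real.norm_eq_abs] at hn
        exact le_trans (le_abs_self _) hn.le
      filter_upwards [hlimsup ((ε*c)/(4*μ)) (by positivity), hev2] with n h1 h2
      rw [div_le_iff₀ hcpos]
      have t1 : 2*μ*⟪F ustar, ustar - u (n+1)⟫
          ≤ 2*μ*(⟪F ustar, ustar - T (u n)⟫ + lam (n+1)*(μ*(‖F ustar‖*B))) :=
        mul_le_mul_of_nonneg_left (hsplit n) (by positivity)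
      have t2 : 2*μ*⟪F ustar, ustar - T (u n)⟫ ≤ 2*μ*((ε*c)/(4*μ)) :=
        mul_le_mul_of_nonneg_left h1 (by positivity)
      have t3 : 2*μ*((ε*c)/(4*μ)) = ε*c/2 := by
        field_simp
        ring
      have hl1 := hlam (n+1)
      -- lam(n+1) * R ≤ ε*c/2
      have t4 : lam (n+1) * (R+1) ≤ ε*c/2 := by
        have := mul_le_mul_of_nonneg_right h2 (by linarith : (0:ℝ) ≤ R+1)
        have e4 : (ε*c)/(2*(R+1)) * (R+1) = ε*c/2 := by
          field_simp
        rw [e4] at this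
        exact this
      have t5 : lam (n+1) * R ≤ ε*c/2 := by
        nlinarith [hl1.1, hR]
      -- combine
      nlinarith [t1, t2, t5, hl1.1.le]
  -- conclusion
  have hnorm0 : Tendsto (fun n => ‖u n - ustar‖) atTop (nhds 0) := by
    have h2 : Tendsto (fun n => Real.sqrt (‖u n - ustar‖^2)) atTop (nhds (Real.sqrt 0)) :=
      (Real.continuous_sqrt.tendsto 0).comp haconv
    rw [Real.sqrt_zero] at h2
    exact h2.congr fun n => Real.sqrt_sq (norm_nonneg _)
  have hconv : Tendsto u atTop (nhds ustar) := by
    rw [tendsto_iff_norm_sub_tendsto_zero]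
    exact hnorm0
  exact ⟨ustar, ⟨hustarfix, hVIP⟩, huniq, hconv⟩
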